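/- (Thermodynamic limit of the finite-size factor.) For each N ≥ 1, define ξ_T(N) = [ ∏_{θ∈θ_p(N)} ∏_{θ'∈θ_a(N)} sinh²((γ_θ+γ_{θ'})/2) / ( ∏_{θ,θ'∈θ_p(N)} sinh((γ_θ+γ_{θ'})/2) · ∏_{θ,θ'∈θ_a(N)} sinh((γ_θ+γ_{θ'})/2) ) ]^{1/4}. Then, for fixed couplings in the ferromagnetic regime, ξ_T(N) → 1 as N → ∞. -/

import Mathlib

open Finset Filter
open scoped ContDiff

noncomputable section

/-- Antiperiodic momenta: θ_a(N) = {(2j−1)π/N : j = 1,…,N}. -/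
def thetaA (N : ℕ) (j : Fin N) : ℝ := (2 * (j : ℝ) + 1) * Real.pi / N

/-- Periodic momenta: θ_p(N) = {2(j−1)π/N : j = 1,…,N}. -/
def thetaP (N : ℕ) (j : Fin N) : ℝ := (2 * (j : ℝ)) * Real.pi / N

lemma xt_sum_shift (g : ℝ → ℝ) (N : ℕ) (h : ℝ) (hper : g (2*N*h) = g 0) :
    ∑ r ∈ Finset.range N, g ((2*(r:ℝ)+2)*h) = ∑ r ∈ Finset.range N, g ((2*(r:ℝ))*h) := by
  have e1 : ∀ r : ℕ, g ((2*(r:ℝ)+2)*h) = (fun n : ℕ => g ((2*(n:ℝ))*h)) (r+1) := by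
    intro r; simp only []; push_cast; ring_nf
  calc ∑ r ∈ Finset.range N, g ((2*(r:ℝ)+2)*h)
      = ∑ r ∈ Finset.range N, (fun n : ℕ => g ((2*(n:ℝ))*h)) (r+1) := by
        exact Finset.sum_congr rfl fun r _ => e1 r
    _ = ∑ r ∈ Finset.range N, g ((2*(r:ℝ))*h) := by
        have h2 := Finset.sum_range_succ' (fun n : ℕ => g ((2*(n:ℝ))*h)) N
        have h3 := Finset.sum_range_succ (fun n : ℕ => g ((2*(n:ℝ))*h)) N
        have hgN : g ((2*(N:ℝ))*h) = g ((2*(0:ℝ))*h) := by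
          have : (2*(N:ℝ))*h = 2*N*h := by ring
          rw [this, hper]; norm_num
        rw [h3] at h2
        push_cast at h2 hgN ⊢
        linarith [h2, hgN]

lemma xt_alt_pair (g : ℝ → ℝ) (N : ℕ) (h : ℝ) (hper : g (2*N*h) = g 0) :
    2 * ∑ r ∈ Finset.range N, (g ((2*(r:ℝ))*h) - g ((2*(r:ℝ)+1)*h))
      = ∑ r ∈ Finset.range N, (g ((2*(r:ℝ))*h) - 2*g ((2*(r:ℝ)+1)*h) + g ((2*(r:ℝ)+2)*h)) := by
  have h1 := xt_sum_shift g N h hper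
  rw [Finset.sum_add_distrib, h1, Finset.mul_sum, ← Finset.sum_add_distrib]
  exact Finset.sum_congr rfl fun r _ => by ring

lemma xt_delta2_le (u u' u'' : ℝ → ℝ)
    (hu : ∀ x, HasDerivAt u (u' x) x) (hu' : ∀ x, HasDerivAt u' (u'' x) x)
    (x h M : ℝ) (hh : 0 < h) (hM : ∀ t ∈ Set.Icc x (x+2*h), |u'' t| ≤ M) :
    |u x - 2*u (x+h) + u (x+2*h)| ≤ h^2 * M := by
  set v : ℝ → ℝ := fun t => u (t+h) - u t with hvdef
  have hvd : ∀ t, HasDerivAt v (u' (t+h) - u' t) t := by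
    intro t
    exact ((hu (t+h)).comp_add_const t h).sub (hu t)
  have hvcont : Continuous v := by
    have : Differentiable ℝ v := fun t => (hvd t).differentiableAt
    exact this.continuous
  have hucont : Continuous u' := by
    have : Differentiable ℝ u' := fun t => (hu' t).differentiableAt
    exact this.continuous
  obtain ⟨ξ, hξ, hs1⟩ := exists_hasDerivAt_eq_slope v (fun t => u' (t+h) - u' t)
    (by linarith : x < x + h) hvcont.continuousOn (fun t _ => hvd t)
  obtain ⟨ζ, hζ, hs2⟩ := exists_hasDerivAt_eq_slope u' u''
    (by linarith : ξ < ξ + h) hucont.continuousOn (fun t _ => hu' t)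
  have hζmem : ζ ∈ Set.Icc x (x+2*h) := by
    obtain ⟨hζ1, hζ2⟩ := hζ
    obtain ⟨hξ1, hξ2⟩ := hξ
    constructor <;> [linarith; linarith]
  have e1 : u x - 2*u (x+h) + u (x+2*h) = v (x+h) - v x := by
    simp only [hvdef]
    have : x + h + h = x + 2*h := by ring
    rw [this]; ring
  have e2 : v (x+h) - v x = (u' (ξ+h) - u' ξ) * h := by
    rw [hs1, show x + h - x = h by ring, div_mul_cancel₀ _ hh.ne']
  have e3 : u' (ξ+h) - u' ξ = u'' ζ * h := by
    rw [hs2, show ξ + h - ξ = h by ring, div_mul_cancel₀ _ hh.ne']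
  rw [e1, e2, e3]
  have : |u'' ζ * h * h| = |u'' ζ| * (h^2) := by
    rw [abs_mul, abs_mul, abs_of_pos hh]; ring
  rw [this]
  have := hM ζ hζmem
  nlinarith [abs_nonneg (u'' ζ), sq_nonneg h]

/-- the mixed fourth difference -/
def xtDD (F : ℝ → ℝ → ℝ) (x y h : ℝ) : ℝ :=
  (F x y - 2*F x (y+h) + F x (y+2*h))
    - 2*(F (x+h) y - 2*F (x+h) (y+h) + F (x+h) (y+2*h))
    + (F (x+2*h) y - 2*F (x+2*h) (y+h) + F (x+2*h) (y+2*h))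

lemma xt_DD_bound (F P1 P2 P3 P4 : ℝ → ℝ → ℝ)
    (h1 : ∀ y x, HasDerivAt (fun x' => F x' y) (P1 x y) x)
    (h2 : ∀ y x, HasDerivAt (fun x' => P1 x' y) (P2 x y) x)
    (h3 : ∀ x y, HasDerivAt (fun y' => P2 x y') (P3 x y) y)
    (h4 : ∀ x y, HasDerivAt (fun y' => P3 x y') (P4 x y) y)
    (x y h M : ℝ) (hh : 0 < h)
    (hM : ∀ s ∈ Set.Icc x (x+2*h), ∀ t ∈ Set.Icc y (y+2*h), |P4 s t| ≤ M) :
    |xtDD F x y h| ≤ h^4 * M := by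
  have inner : ∀ s ∈ Set.Icc x (x+2*h),
      |P2 s y - 2*P2 s (y+h) + P2 s (y+2*h)| ≤ h^2 * M := by
    intro s hs
    exact xt_delta2_le (fun y' => P2 s y') (fun y' => P3 s y') (fun y' => P4 s y')
      (h3 s) (h4 s) y h M hh (hM s hs)
  have outer := xt_delta2_le
    (fun x' => F x' y - 2*F x' (y+h) + F x' (y+2*h))
    (fun x' => P1 x' y - 2*P1 x' (y+h) + P1 x' (y+2*h))
    (fun x' => P2 x' y - 2*P2 x' (y+h) + P2 x' (y+2*h))
    (fun x' => ((h1 y x').sub ((h1 (y+h) x').const_mul 2)).add (h1 (y+2*h) x'))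
    (fun x' => ((h2 y x').sub ((h2 (y+h) x').const_mul 2)).add (h2 (y+2*h) x'))
    x h (h^2 * M) hh inner
  have : xtDD F x y h =
      (F x y - 2*F x (y+h) + F x (y+2*h))
        - 2*(F (x+h) y - 2*F (x+h) (y+h) + F (x+h) (y+2*h))
        + (F (x+2*h) y - 2*F (x+2*h) (y+h) + F (x+2*h) (y+2*h)) := rfl
  rw [this]
  calc _ ≤ h^2 * (h^2*M) := outer
    _ = h^4 * M := by ring

lemma xt_sum_identity (f : ℝ → ℝ → ℝ) (N : ℕ) (h : ℝ)
    (hp1 : ∀ x, f x (2*N*h) = f x 0) (hp2 : ∀ y, f (2*N*h) y = f 0 y) :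
    4 * ((∑ j ∈ Finset.range N, ∑ k ∈ Finset.range N, f ((2*(j:ℝ))*h) ((2*(k:ℝ))*h))
        + (∑ j ∈ Finset.range N, ∑ k ∈ Finset.range N, f ((2*(j:ℝ)+1)*h) ((2*(k:ℝ)+1)*h))
        - (∑ j ∈ Finset.range N, ∑ k ∈ Finset.range N, f ((2*(j:ℝ))*h) ((2*(k:ℝ)+1)*h))
        - (∑ j ∈ Finset.range N, ∑ k ∈ Finset.range N, f ((2*(j:ℝ)+1)*h) ((2*(k:ℝ))*h)))
      = ∑ r ∈ Finset.range N, ∑ s ∈ Finset.range N, xtDD f ((2*(r:ℝ))*h) ((2*(s:ℝ))*h) h := by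
  set A1 : ℝ → ℝ := fun x => ∑ k ∈ Finset.range N, (f x ((2*(k:ℝ))*h) - f x ((2*(k:ℝ)+1)*h)) with hA1
  have step1 : ∀ x, 2 * A1 x
      = ∑ s ∈ Finset.range N, (f x ((2*(s:ℝ))*h) - 2*f x ((2*(s:ℝ)+1)*h) + f x ((2*(s:ℝ)+2)*h)) :=
    fun x => xt_alt_pair (f x) N h (by rw [hp1 x])
  have hA1per : A1 (2*N*h) = A1 0 := by
    simp only [hA1]
    exact Finset.sum_congr rfl fun k _ => by rw [hp2, hp2]
  have step2 := xt_alt_pair A1 N h hA1per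
  -- LHS of step2: 2 * (sum over j of A1(2j h) - A1((2j+1) h))
  have lhs_eq : ∑ r ∈ Finset.range N, (A1 ((2*(r:ℝ))*h) - A1 ((2*(r:ℝ)+1)*h))
      = (∑ j ∈ Finset.range N, ∑ k ∈ Finset.range N, f ((2*(j:ℝ))*h) ((2*(k:ℝ))*h))
        - (∑ j ∈ Finset.range N, ∑ k ∈ Finset.range N, f ((2*(j:ℝ))*h) ((2*(k:ℝ)+1)*h))
        - ((∑ j ∈ Finset.range N, ∑ k ∈ Finset.range N, f ((2*(j:ℝ)+1)*h) ((2*(k:ℝ))*h))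
          - (∑ j ∈ Finset.range N, ∑ k ∈ Finset.range N, f ((2*(j:ℝ)+1)*h) ((2*(k:ℝ)+1)*h))) := by
    simp only [hA1, Finset.sum_sub_distrib]
    try ring
  -- RHS: each Δ² of A1 expands via step1
  have rhs_eq : ∑ r ∈ Finset.range N, (A1 ((2*(r:ℝ))*h) - 2*A1 ((2*(r:ℝ)+1)*h) + A1 ((2*(r:ℝ)+2)*h))
      = (1/2) * ∑ r ∈ Finset.range N, ∑ s ∈ Finset.range N, xtDD f ((2*(r:ℝ))*h) ((2*(s:ℝ))*h) h := by
    rw [Finset.mul_sum]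
    refine Finset.sum_congr rfl fun r _ => ?_
    have er : (1/2 : ℝ) * ∑ s ∈ Finset.range N, xtDD f ((2*(r:ℝ))*h) ((2*(s:ℝ))*h) h
        = (1/2) * ((2 * A1 ((2*(r:ℝ))*h)) - 2*(2*A1 ((2*(r:ℝ))*h + h)) + (2*A1 ((2*(r:ℝ))*h + 2*h))) := by
      congr 1
      rw [step1, step1, step1, Finset.mul_sum, ← Finset.sum_sub_distrib, ← Finset.sum_add_distrib]
      refine Finset.sum_congr rfl fun s _ => ?_
      have e1 : (2*(r:ℝ))*h + h = (2*(r:ℝ)+1)*h := by ring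
      have e2 : (2*(r:ℝ))*h + 2*h = (2*(r:ℝ)+2)*h := by ring
      simp only [xtDD, e1, e2]
      ring
    rw [er]
    have e1 : (2*(r:ℝ))*h + h = (2*(r:ℝ)+1)*h := by ring
    have e2 : (2*(r:ℝ))*h + 2*h = (2*(r:ℝ)+2)*h := by ring
    rw [e1, e2]; ring
  rw [lhs_eq] at step2
  rw [rhs_eq] at step2
  linarith [step2]

def xtPhi (a b : ℝ) : ℝ → ℝ := fun θ => Real.arsinh (Real.sqrt ((a - b*Real.cos θ)^2 - 1))

def xtC : ℝ → ℝ := fun t => Real.cosh t / Real.sinh t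

def xtF (a b : ℝ) : ℝ → ℝ → ℝ :=
  fun x y => Real.log (Real.sinh ((xtPhi a b x + xtPhi a b y)/2))

lemma xt_z_gt {a b : ℝ} (hb : 0 < b) (hab : 1 < a - b) (θ : ℝ) : 1 < a - b*Real.cos θ := by
  nlinarith [Real.cos_le_one θ]

lemma xtPhi_cosh {a b : ℝ} (hb : 0 < b) (hab : 1 < a - b) (θ : ℝ) :
    Real.cosh (xtPhi a b θ) = a - b*Real.cos θ := by
  have hz := xt_z_gt hb hab θ
  unfold xtPhi
  rw [Real.cosh_arsinh, Real.sq_sqrt (by nlinarith)]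
  rw [show 1 + ((a - b*Real.cos θ)^2 - 1) = (a - b*Real.cos θ)^2 by ring]
  exact Real.sqrt_sq (by linarith)

lemma xtPhi_pos {a b : ℝ} (hb : 0 < b) (hab : 1 < a - b) (θ : ℝ) : 0 < xtPhi a b θ := by
  have hz := xt_z_gt hb hab θ
  unfold xtPhi
  rw [Real.arsinh_pos_iff]
  exact Real.sqrt_pos.mpr (by nlinarith)

lemma xtPhi_per (a b : ℝ) (θ : ℝ) : xtPhi a b (θ + 2*Real.pi) = xtPhi a b θ := by
  unfold xtPhi
  rw [Real.cos_add_two_pi]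

lemma xtPhi_contDiff {a b : ℝ} (hb : 0 < b) (hab : 1 < a - b) :
    ContDiff ℝ ∞ (xtPhi a b) := by
  rw [contDiff_iff_contDiffAt]
  intro θ
  have hz := xt_z_gt hb hab θ
  have hinner : ContDiffAt ℝ ∞ (fun θ : ℝ => (a - b*Real.cos θ)^2 - 1) θ :=
    (((contDiff_const.sub (contDiff_const.mul Real.contDiff_cos)).pow 2).sub
      contDiff_const).contDiffAt
  have hsq : ContDiffAt ℝ ∞ (fun θ : ℝ => Real.sqrt ((a - b*Real.cos θ)^2 - 1)) θ :=
    hinner.sqrt (by nlinarith)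
  exact Real.contDiff_arsinh.contDiffAt.comp θ hsq

lemma xtC_hasDeriv {t : ℝ} (ht : Real.sinh t ≠ 0) : HasDerivAt xtC (1 - xtC t^2) t := by
  have h := (Real.hasDerivAt_cosh t).div (Real.hasDerivAt_sinh t) ht
  refine HasDerivAt.congr_deriv h ?_
  unfold xtC
  field_simp

lemma xt_deriv_bound (a b : ℝ) (hb : 0 < b) (hab : 1 < a - b) :
    ∃ M : ℝ, 0 ≤ M ∧ ∀ x y h : ℝ, 0 < h →
      x ∈ Set.Icc 0 (2*Real.pi) → y ∈ Set.Icc 0 (2*Real.pi) → h ≤ Real.pi →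
      |xtDD (xtF a b) x y h| ≤ h^4 * M := by
  have hφcd : ContDiff ℝ ∞ (xtPhi a b) := xtPhi_contDiff hb hab
  have hφpos : ∀ θ, 0 < xtPhi a b θ := xtPhi_pos hb hab
  set φ : ℝ → ℝ := xtPhi a b with hφdef
  set D1 : ℝ → ℝ := deriv φ with hD1def
  set D2 : ℝ → ℝ := deriv D1 with hD2def
  have hD1cd : ContDiff ℝ ∞ D1 := (contDiff_infty_iff_deriv.mp hφcd).2
  have hder1 : ∀ x, HasDerivAt φ (D1 x) x := fun x =>
    ((hφcd.differentiable (by norm_num)) x).hasDerivAt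
  have hder2 : ∀ x, HasDerivAt D1 (D2 x) x := fun x =>
    ((hD1cd.differentiable (by norm_num)) x).hasDerivAt
  have hcφ : Continuous φ := hφcd.continuous
  have hcD1 : Continuous D1 := hD1cd.continuous
  have hcD2 : Continuous D2 := (contDiff_infty_iff_deriv.mp hD1cd).2.continuous
  have hspos : ∀ x y : ℝ, 0 < Real.sinh ((φ x + φ y)/2) := by
    intro x y
    have h1 := hφpos x
    have h2 := hφpos y
    rw [Real.sinh_pos_iff]
    simp only [hφdef]
    linarith
  have hsne : ∀ x y : ℝ, Real.sinh ((φ x + φ y)/2) ≠ 0 := fun x y => (hspos x y).ne'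
  -- partial derivative chain
  have h1 : ∀ y x, HasDerivAt (fun x' => xtF a b x' y)
      (xtC ((φ x + φ y)/2) * (D1 x / 2)) x := by
    intro y x
    have hs : HasDerivAt (fun x' => (φ x' + φ y)/2) (D1 x / 2) x :=
      ((hder1 x).add_const (φ y)).div_const 2
    have hsh : HasDerivAt (fun x' => Real.sinh ((φ x' + φ y)/2))
        (Real.cosh ((φ x + φ y)/2) * (D1 x / 2)) x :=
      (Real.hasDerivAt_sinh _).comp x hs
    have hl := hsh.log (hsne x y)
    have : (fun x' => xtF a b x' y) = (fun x' => Real.log (Real.sinh ((φ x' + φ y)/2))) := by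
      funext x'; rfl
    rw [this]
    convert hl using 1
    unfold xtC
    field_simp
  have h2 : ∀ y x, HasDerivAt (fun x' => xtC ((φ x' + φ y)/2) * (D1 x' / 2))
      ((1 - xtC ((φ x + φ y)/2)^2) * (D1 x/2)^2 + xtC ((φ x + φ y)/2) * (D2 x/2)) x := by
    intro y x
    have hs : HasDerivAt (fun x' => (φ x' + φ y)/2) (D1 x / 2) x :=
      ((hder1 x).add_const (φ y)).div_const 2
    have hc : HasDerivAt (fun x' => xtC ((φ x' + φ y)/2))
        ((1 - xtC ((φ x + φ y)/2)^2) * (D1 x / 2)) x :=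
      by have := (xtC_hasDeriv (hsne x y)).comp x hs; exact this
    have hd : HasDerivAt (fun x' => D1 x' / 2) (D2 x / 2) x := (hder2 x).div_const 2
    have := hc.mul hd
    refine HasDerivAt.congr_deriv this ?_
    ring
  have h3 : ∀ x y, HasDerivAt
      (fun y' => (1 - xtC ((φ x + φ y')/2)^2) * (D1 x/2)^2 + xtC ((φ x + φ y')/2) * (D2 x/2))
      ((1 - xtC ((φ x + φ y)/2)^2) * (D1 y/2)
        * (D2 x/2 - 2*xtC ((φ x + φ y)/2) * (D1 x/2)^2)) y := by
    intro x y
    have hs : HasDerivAt (fun y' => (φ x + φ y')/2) (D1 y / 2) y :=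
      ((hder1 y).const_add (φ x)).div_const 2
    have hc : HasDerivAt (fun y' => xtC ((φ x + φ y')/2))
        ((1 - xtC ((φ x + φ y)/2)^2) * (D1 y / 2)) y :=
      by have := (xtC_hasDeriv (hsne x y)).comp y hs; exact this
    have hb1 := ((hasDerivAt_const y (1:ℝ)).sub (hc.pow 2)).mul_const ((D1 x/2)^2)
    have hb2 := hc.mul_const (D2 x/2)
    have := hb1.add hb2
    refine HasDerivAt.congr_deriv this ?_
    push_cast
    ring
  have h4 : ∀ x y, HasDerivAt
      (fun y' => (1 - xtC ((φ x + φ y')/2)^2) * (D1 y'/2)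
        * (D2 x/2 - 2*xtC ((φ x + φ y')/2) * (D1 x/2)^2))
      ((1 - xtC ((φ x + φ y)/2)^2) * (D2 y/2) * (D2 x/2 - 2*xtC ((φ x + φ y)/2)*(D1 x/2)^2)
        - 2*xtC ((φ x + φ y)/2)*(1 - xtC ((φ x + φ y)/2)^2)*(D1 y/2)^2
            * (D2 x/2 - 2*xtC ((φ x + φ y)/2)*(D1 x/2)^2)
        - 2*(1 - xtC ((φ x + φ y)/2)^2)^2*(D1 y/2)^2*(D1 x/2)^2) y := by
    intro x y
    have hs : HasDerivAt (fun y' => (φ x + φ y')/2) (D1 y / 2) y :=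
      ((hder1 y).const_add (φ x)).div_const 2
    have hc : HasDerivAt (fun y' => xtC ((φ x + φ y')/2))
        ((1 - xtC ((φ x + φ y)/2)^2) * (D1 y / 2)) y :=
      by have := (xtC_hasDeriv (hsne x y)).comp y hs; exact this
    have hu1 := (hasDerivAt_const y (1:ℝ)).sub (hc.pow 2)
    have hu2 : HasDerivAt (fun y' => D1 y' / 2) (D2 y / 2) y := (hder2 y).div_const 2
    have hu3 := (hasDerivAt_const y (D2 x/2)).sub ((hc.const_mul (2:ℝ)).mul_const ((D1 x/2)^2))
    have := (hu1.mul hu2).mul hu3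
    refine HasDerivAt.congr_deriv this ?_
    push_cast
    simp only [Pi.sub_apply, Pi.mul_apply, Pi.pow_apply]
    ring
  -- bound on the compact box
  have hcC : Continuous (fun p : ℝ × ℝ => xtC ((φ p.1 + φ p.2)/2)) := by
    have hcs : Continuous (fun p : ℝ × ℝ => (φ p.1 + φ p.2)/2) :=
      ((hcφ.comp continuous_fst).add (hcφ.comp continuous_snd)).div_const 2
    unfold xtC
    exact (Real.continuous_cosh.comp hcs).div (Real.continuous_sinh.comp hcs)
      (fun p => hsne p.1 p.2)
  have hGcont : Continuous (fun p : ℝ × ℝ =>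
      (1 - xtC ((φ p.1 + φ p.2)/2)^2) * (D2 p.2/2)
          * (D2 p.1/2 - 2*xtC ((φ p.1 + φ p.2)/2)*(D1 p.1/2)^2)
        - 2*xtC ((φ p.1 + φ p.2)/2)*(1 - xtC ((φ p.1 + φ p.2)/2)^2)*(D1 p.2/2)^2
            * (D2 p.1/2 - 2*xtC ((φ p.1 + φ p.2)/2)*(D1 p.1/2)^2)
        - 2*(1 - xtC ((φ p.1 + φ p.2)/2)^2)^2*(D1 p.2/2)^2*(D1 p.1/2)^2) := by
    have cD1x : Continuous (fun p : ℝ×ℝ => D1 p.1/2) := (hcD1.comp continuous_fst).div_const 2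
    have cD1y : Continuous (fun p : ℝ×ℝ => D1 p.2/2) := (hcD1.comp continuous_snd).div_const 2
    have cD2x : Continuous (fun p : ℝ×ℝ => D2 p.1/2) := (hcD2.comp continuous_fst).div_const 2
    have cD2y : Continuous (fun p : ℝ×ℝ => D2 p.2/2) := (hcD2.comp continuous_snd).div_const 2
    have c1 : Continuous (fun p : ℝ×ℝ => 1 - xtC ((φ p.1 + φ p.2)/2)^2) :=
      continuous_const.sub (hcC.pow 2)
    have c3 : Continuous (fun p : ℝ×ℝ =>
        D2 p.1/2 - 2*xtC ((φ p.1 + φ p.2)/2)*(D1 p.1/2)^2) :=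
      cD2x.sub ((continuous_const.mul hcC).mul (cD1x.pow 2))
    exact (((c1.mul cD2y).mul c3).sub
        ((((continuous_const.mul hcC).mul c1).mul (cD1y.pow 2)).mul c3)).sub
      (((continuous_const.mul (c1.pow 2)).mul (cD1y.pow 2)).mul (cD1x.pow 2))
  obtain ⟨M0, hM0⟩ := IsCompact.exists_bound_of_continuousOn
    ((isCompact_Icc.prod isCompact_Icc) :
      IsCompact ((Set.Icc (0:ℝ) (4*Real.pi)) ×ˢ (Set.Icc (0:ℝ) (4*Real.pi))))
    hGcont.continuousOn
  refine ⟨max M0 0, le_max_right _ _, ?_⟩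
  intro x y h hh hx hy hπ
  have hbound := xt_DD_bound (xtF a b) _ _ _ _
    h1 h2 h3 h4 x y h (max M0 0) hh ?_
  · exact hbound
  · intro s hs t ht
    have hsmem : (s, t) ∈ (Set.Icc (0:ℝ) (4*Real.pi)) ×ˢ (Set.Icc (0:ℝ) (4*Real.pi)) := by
      constructor
      · constructor
        · exact le_trans hx.1 hs.1
        · have := hs.2; have := hx.2; have := Real.pi_pos; simp only [] at *; nlinarith
      · constructor
        · exact le_trans hy.1 ht.1
        · have := ht.2; have := hy.2; have := Real.pi_pos; nlinarith
    have := hM0 (s, t) hsmem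
    rw [Real.norm_eq_abs] at this
    exact le_trans this (le_max_left _ _)


lemma xt_prod_exp {N : ℕ} (g : ℕ → ℕ → ℝ) :
    (∏ j : Fin N, ∏ k : Fin N, Real.exp (g j k))
      = Real.exp (∑ j ∈ Finset.range N, ∑ k ∈ Finset.range N, g j k) := by
  have hinner : ∀ j : ℕ, (∏ k : Fin N, Real.exp (g j k))
      = Real.exp (∑ k ∈ Finset.range N, g j k) := by
    intro j
    rw [← Fin.sum_univ_eq_sum_range, Real.exp_sum]
  calc (∏ j : Fin N, ∏ k : Fin N, Real.exp (g j k))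
      = ∏ j : Fin N, Real.exp (∑ k ∈ Finset.range N, g (j:ℕ) k) :=
        Finset.prod_congr rfl (fun j _ => hinner j)
    _ = Real.exp (∑ j ∈ Finset.range N, ∑ k ∈ Finset.range N, g j k) := by
        rw [← Fin.sum_univ_eq_sum_range (fun j => ∑ k ∈ Finset.range N, g j k) N, Real.exp_sum]

/-- Thermodynamic limit of the finite-size factor ξ_T(N): ξ_T(N) → 1 as N → ∞. -/
theorem xiT_tendsto_one
    (Kx Ky Kxs : ℝ)
    (hKx : 0 < Kx) (hKy : 0 < Ky)
    (hKxs_pos : 0 < Kxs) (hKxs : Real.tanh Kxs = Real.exp (-(2 * Kx)))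
    (hferro : Kxs < Ky)
    (γ : ℝ → ℝ) (hγ_nonneg : ∀ θ, 0 ≤ γ θ)
    (hγ : ∀ θ, Real.cosh (γ θ) =
      Real.cosh (2 * Kxs) * Real.cosh (2 * Ky) -
        Real.sinh (2 * Kxs) * Real.sinh (2 * Ky) * Real.cos θ)
    (ξT : ℕ → ℝ)
    (hξT : ∀ N : ℕ, 1 ≤ N → ξT N =
      ((∏ j : Fin N, ∏ k : Fin N,
          Real.sinh ((γ (thetaP N j) + γ (thetaA N k)) / 2) ^ 2) /
        ((∏ j : Fin N, ∏ k : Fin N,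
            Real.sinh ((γ (thetaP N j) + γ (thetaP N k)) / 2)) *
          ∏ j : Fin N, ∏ k : Fin N,
            Real.sinh ((γ (thetaA N j) + γ (thetaA N k)) / 2))) ^ ((4 : ℝ)⁻¹)) :
    Tendsto ξT atTop (nhds 1) := by
  set a : ℝ := Real.cosh (2*Kxs) * Real.cosh (2*Ky) with hadef
  set b : ℝ := Real.sinh (2*Kxs) * Real.sinh (2*Ky) with hbdef
  have hb : 0 < b := mul_pos (by positivity) (by positivity)
  have hab : 1 < a - b := by
    have h1 : a - b = Real.cosh (2*Kxs - 2*Ky) := by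
      rw [Real.cosh_sub]
    rw [h1, Real.one_lt_cosh]
    intro hcontra
    have : Kxs = Ky := by linarith
    linarith
  -- identify γ with the explicit formula
  have hγfun : γ = xtPhi a b := by
    funext θ
    have h1 : Real.cosh (γ θ) = Real.cosh (xtPhi a b θ) := by
      rw [hγ θ, xtPhi_cosh hb hab θ]
    exact Real.cosh_strictMonoOn.injOn (hγ_nonneg θ) (xtPhi_pos hb hab θ).le h1
  have hφpos := xtPhi_pos hb hab
  have hspos : ∀ x y : ℝ, 0 < Real.sinh ((xtPhi a b x + xtPhi a b y)/2) := by
    intro x y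
    rw [Real.sinh_pos_iff]
    have := hφpos x; have := hφpos y; linarith
  -- the three log-sums
  set SP : ℕ → ℝ := fun N => ∑ j ∈ Finset.range N, ∑ k ∈ Finset.range N,
    xtF a b ((2*(j:ℝ))*(Real.pi/N)) ((2*(k:ℝ))*(Real.pi/N)) with hSPdef
  set SA : ℕ → ℝ := fun N => ∑ j ∈ Finset.range N, ∑ k ∈ Finset.range N,
    xtF a b ((2*(j:ℝ)+1)*(Real.pi/N)) ((2*(k:ℝ)+1)*(Real.pi/N)) with hSAdef
  set SM : ℕ → ℝ := fun N => ∑ j ∈ Finset.range N, ∑ k ∈ Finset.range N,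
    xtF a b ((2*(j:ℝ))*(Real.pi/N)) ((2*(k:ℝ)+1)*(Real.pi/N)) with hSMdef
  set TT : ℕ → ℝ := fun N => 2*SM N - SP N - SA N with hTTdef
  -- Step I : rewrite ξT
  have hXi : ∀ N : ℕ, 1 ≤ N → ξT N = Real.exp (TT N * (4:ℝ)⁻¹) := by
    intro N hN
    have hNR : (0:ℝ) < N := by exact_mod_cast hN
    have hθp : ∀ j : Fin N, thetaP N j = (2*((j:ℕ):ℝ))*(Real.pi/N) := by
      intro j; unfold thetaP; rw [mul_div_assoc]
    have hθa : ∀ j : Fin N, thetaA N j = (2*((j:ℕ):ℝ)+1)*(Real.pi/N) := by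
      intro j; unfold thetaA; rw [mul_div_assoc]
    rw [hξT N hN, hγfun]
    simp only [hθp, hθa]
    have hnum : (∏ j : Fin N, ∏ k : Fin N,
        Real.sinh ((xtPhi a b ((2*((j:ℕ):ℝ))*(Real.pi/N))
          + xtPhi a b ((2*((k:ℕ):ℝ)+1)*(Real.pi/N))) / 2) ^ 2)
        = Real.exp (∑ j ∈ Finset.range N, ∑ k ∈ Finset.range N,
            2 * xtF a b ((2*(j:ℝ))*(Real.pi/N)) ((2*(k:ℝ)+1)*(Real.pi/N))) := by
      rw [← xt_prod_exp]
      refine Finset.prod_congr rfl (fun j _ => Finset.prod_congr rfl (fun k _ => ?_))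
      rw [show (2:ℝ) * xtF a b ((2*((j:ℕ):ℝ))*(Real.pi/N)) ((2*((k:ℕ):ℝ)+1)*(Real.pi/N))
          = xtF a b ((2*((j:ℕ):ℝ))*(Real.pi/N)) ((2*((k:ℕ):ℝ)+1)*(Real.pi/N))
            + xtF a b ((2*((j:ℕ):ℝ))*(Real.pi/N)) ((2*((k:ℕ):ℝ)+1)*(Real.pi/N)) by ring,
        Real.exp_add]
      unfold xtF
      rw [Real.exp_log (hspos _ _)]
      ring
    have hden1 : (∏ j : Fin N, ∏ k : Fin N,
        Real.sinh ((xtPhi a b ((2*((j:ℕ):ℝ))*(Real.pi/N))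
          + xtPhi a b ((2*((k:ℕ):ℝ))*(Real.pi/N))) / 2))
        = Real.exp (SP N) := by
      rw [hSPdef, ← xt_prod_exp]
      refine Finset.prod_congr rfl (fun j _ => Finset.prod_congr rfl (fun k _ => ?_))
      unfold xtF
      rw [Real.exp_log (hspos _ _)]
    have hden2 : (∏ j : Fin N, ∏ k : Fin N,
        Real.sinh ((xtPhi a b ((2*((j:ℕ):ℝ)+1)*(Real.pi/N))
          + xtPhi a b ((2*((k:ℕ):ℝ)+1)*(Real.pi/N))) / 2))
        = Real.exp (SA N) := by
      rw [hSAdef, ← xt_prod_exp]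
      refine Finset.prod_congr rfl (fun j _ => Finset.prod_congr rfl (fun k _ => ?_))
      unfold xtF
      rw [Real.exp_log (hspos _ _)]
    rw [hnum, hden1, hden2, ← Real.exp_add, ← Real.exp_sub]
    rw [Real.rpow_def_of_pos (Real.exp_pos _), Real.log_exp]
    congr 1
    have : (∑ j ∈ Finset.range N, ∑ k ∈ Finset.range N,
        2 * xtF a b ((2*(j:ℝ))*(Real.pi/N)) ((2*(k:ℝ)+1)*(Real.pi/N))) = 2 * SM N := by
      rw [hSMdef, Finset.mul_sum]
      refine Finset.sum_congr rfl (fun j _ => ?_)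
      rw [Finset.mul_sum]
    rw [this]
    simp only [hTTdef]
    ring
  -- Step II : the bound
  obtain ⟨M, hM0, hMb⟩ := xt_deriv_bound a b hb hab
  have hbound : ∀ N : ℕ, 1 ≤ N → |TT N| ≤ (Real.pi^4 * M / 4) / N^2 := by
    intro N hN
    have hNR : (0:ℝ) < N := by exact_mod_cast hN
    have hNne : (N:ℝ) ≠ 0 := hNR.ne'
    set h : ℝ := Real.pi / N with hhdef
    have hpi := Real.pi_pos
    have hh : 0 < h := by positivity
    have hhle : h ≤ Real.pi := by
      rw [hhdef, div_le_iff₀ hNR]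
      nlinarith [hpi, (by exact_mod_cast hN : (1:ℝ) ≤ N)]
    have hper1 : ∀ x, xtF a b x (2*N*h) = xtF a b x 0 := by
      intro x
      have e : 2*(N:ℝ)*h = 0 + 2*Real.pi := by
        rw [hhdef]; field_simp; ring
      rw [e]
      unfold xtF
      rw [xtPhi_per]
    have hper2 : ∀ y, xtF a b (2*N*h) y = xtF a b 0 y := by
      intro y
      have e : 2*(N:ℝ)*h = 0 + 2*Real.pi := by
        rw [hhdef]; field_simp; ring
      rw [e]
      unfold xtF
      rw [xtPhi_per]
    have hid := xt_sum_identity (xtF a b) N h hper1 hper2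
    have hsymm : ∀ x y, xtF a b x y = xtF a b y x := by
      intro x y; unfold xtF; rw [add_comm]
    have hswap : (∑ j ∈ Finset.range N, ∑ k ∈ Finset.range N,
        xtF a b ((2*(j:ℝ)+1)*h) ((2*(k:ℝ))*h)) = SM N := by
      rw [hSMdef]
      rw [Finset.sum_comm]
      refine Finset.sum_congr rfl (fun k _ => Finset.sum_congr rfl (fun j _ => ?_))
      rw [hsymm]
    rw [hswap] at hid
    have hSPh : (∑ j ∈ Finset.range N, ∑ k ∈ Finset.range N,
        xtF a b ((2*(j:ℝ))*h) ((2*(k:ℝ))*h)) = SP N := rfl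
    have hSAh : (∑ j ∈ Finset.range N, ∑ k ∈ Finset.range N,
        xtF a b ((2*(j:ℝ)+1)*h) ((2*(k:ℝ)+1)*h)) = SA N := rfl
    have hSMh : (∑ j ∈ Finset.range N, ∑ k ∈ Finset.range N,
        xtF a b ((2*(j:ℝ))*h) ((2*(k:ℝ)+1)*h)) = SM N := rfl
    rw [hSPh, hSAh, hSMh] at hid
    -- |TT N| = |sum|/4
    have hDDb : ∀ r ∈ Finset.range N, ∀ s ∈ Finset.range N,
        |xtDD (xtF a b) ((2*(r:ℝ))*h) ((2*(s:ℝ))*h) h| ≤ h^4 * M := by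
      intro r hr s hs
      have hrN : (r:ℝ) < N := by exact_mod_cast Finset.mem_range.mp hr
      have hsN : (s:ℝ) < N := by exact_mod_cast Finset.mem_range.mp hs
      refine hMb _ _ _ hh ⟨by positivity, ?_⟩ ⟨by positivity, ?_⟩ hhle
      · rw [hhdef, mul_div_assoc', div_le_iff₀ hNR]; nlinarith
      · rw [hhdef, mul_div_assoc', div_le_iff₀ hNR]; nlinarith
    have hsum : |∑ r ∈ Finset.range N, ∑ s ∈ Finset.range N,
        xtDD (xtF a b) ((2*(r:ℝ))*h) ((2*(s:ℝ))*h) h| ≤ N^2 * (h^4 * M) := by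
      calc |∑ r ∈ Finset.range N, ∑ s ∈ Finset.range N,
          xtDD (xtF a b) ((2*(r:ℝ))*h) ((2*(s:ℝ))*h) h|
          ≤ ∑ r ∈ Finset.range N, |∑ s ∈ Finset.range N,
              xtDD (xtF a b) ((2*(r:ℝ))*h) ((2*(s:ℝ))*h) h| :=
            Finset.abs_sum_le_sum_abs _ _
        _ ≤ ∑ r ∈ Finset.range N, ∑ s ∈ Finset.range N,
              |xtDD (xtF a b) ((2*(r:ℝ))*h) ((2*(s:ℝ))*h) h| :=
            Finset.sum_le_sum (fun r _ => Finset.abs_sum_le_sum_abs _ _)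
        _ ≤ ∑ r ∈ Finset.range N, ∑ s ∈ Finset.range N, h^4 * M := by
            refine Finset.sum_le_sum (fun r hr => Finset.sum_le_sum (fun s hs => ?_))
            exact hDDb r hr s hs
        _ = N^2 * (h^4 * M) := by
            rw [Finset.sum_const, Finset.sum_const]
            simp [Finset.card_range]
            ring
    have hTTrel : TT N = -(1/4) * (∑ r ∈ Finset.range N, ∑ s ∈ Finset.range N,
        xtDD (xtF a b) ((2*(r:ℝ))*h) ((2*(s:ℝ))*h) h) := by
      rw [hTTdef]; simp only []
      linarith [hid]
    rw [hTTrel, abs_mul]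
    have h14 : |(-(1/4) : ℝ)| = 1/4 := by norm_num
    rw [h14]
    have : (1/4 : ℝ) * (N^2 * (h^4*M)) = (Real.pi^4 * M / 4) / N^2 := by
      rw [hhdef]
      field_simp
    calc (1/4 : ℝ) * |∑ r ∈ Finset.range N, ∑ s ∈ Finset.range N,
        xtDD (xtF a b) ((2*(r:ℝ))*h) ((2*(s:ℝ))*h) h| ≤ (1/4) * (N^2 * (h^4*M)) := by
          linarith [hsum]
      _ = (Real.pi^4 * M / 4) / N^2 := this
  -- Step III : conclude
  have hTT0 : Tendsto TT atTop (nhds 0) := by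
    apply squeeze_zero_norm' (a := fun N : ℕ => (Real.pi^4 * M / 4) / (N:ℝ)^2)
    · filter_upwards [eventually_ge_atTop 1] with N hN
      rw [Real.norm_eq_abs]
      exact hbound N hN
    · apply Tendsto.div_atTop tendsto_const_nhds
      exact (tendsto_pow_atTop two_ne_zero).comp tendsto_natCast_atTop_atTop
  have hexp : Tendsto (fun N : ℕ => Real.exp (TT N * (4:ℝ)⁻¹)) atTop (nhds 1) := by
    have h1 : Tendsto (fun N : ℕ => TT N * (4:ℝ)⁻¹) atTop (nhds 0) := by
      have := hTT0.mul_const ((4:ℝ)⁻¹)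
      simpa using this
    have h2 : Tendsto (fun N : ℕ => Real.exp (TT N * (4:ℝ)⁻¹)) atTop (nhds (Real.exp 0)) :=
      (Real.continuous_exp.tendsto 0).comp h1
    rwa [Real.exp_zero] at h2
  refine hexp.congr' ?_
  filter_upwards [eventually_ge_atTop 1] with N hN
  exact (hXi N hN).symm
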